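/- Let A be a unital C*-algebra, X and Y compact Hausdorff spaces, and ι_C : C(X) → A, ι_D : C(Y) → A unital *-homomorphisms forming a relatively diffuse pair. Let M be a unital C*-algebra and let φ : A → M, φ_C : ℓ∞(X) → M, φ_D : ℓ∞(Y) → M be unital *-homomorphisms such that φ_C composed with the inclusion C(X) ⊆ ℓ∞(X) equals φ ∘ ι_C, and φ_D composed with the inclusion C(Y) ⊆ ℓ∞(Y) equals φ ∘ ι_D. Then for every x ∈ X and y ∈ Y one has φ_C(δ_x) · φ_D(δ_y) = 0. -/

import Mathlib

open MeasureTheory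
open scoped ENNReal ComplexOrder

/-- The canonical inclusion of `C(X)` into `ℓ∞(X)` for a compact Hausdorff space `X`,
sending a continuous function to the corresponding bounded function. -/
noncomputable def inclCLinf {X : Type*} [TopologicalSpace X] [CompactSpace X]
    (f : C(X, ℂ)) : lp (fun _ : X => ℂ) ∞ :=
  ⟨fun x => f x, memℓp_infty (isCompact_range ((map_continuous f).norm)).bddAbove⟩

open scoped Classical in
/-- The indicator function `δ_x ∈ ℓ∞(X)` of the singleton `{x}`. -/
noncomputable def linfDelta {X : Type*} (x : X) : lp (fun _ : X => ℂ) ∞ :=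
  ⟨fun z => if z = x then 1 else 0,
    memℓp_infty ⟨1, by rintro r ⟨z, rfl⟩; dsimp only; split <;> simp⟩⟩

section LpAux

variable {X : Type*} [TopologicalSpace X] [CompactSpace X]

open scoped Classical in
lemma linfDelta_apply {X : Type*} (x z : X) :
    (linfDelta x : ∀ _ : X, ℂ) z = if z = x then 1 else 0 := rfl

lemma inclCLinf_apply (f : C(X, ℂ)) (z : X) :
    (inclCLinf f : ∀ _ : X, ℂ) z = f z := rfl

lemma linfDelta_mul_self {X : Type*} (x : X) :
    linfDelta x * linfDelta x = (linfDelta x : lp (fun _ : X => ℂ) ∞) := by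
  apply lp.ext
  rw [lp.infty_coeFn_mul]
  funext z
  simp only [Pi.mul_apply, linfDelta_apply]
  split <;> simp

lemma star_linfDelta {X : Type*} (x : X) :
    star (linfDelta x) = (linfDelta x : lp (fun _ : X => ℂ) ∞) := by
  apply lp.ext
  rw [lp.coeFn_star]
  funext z
  simp only [Pi.star_apply, linfDelta_apply]
  split <;> simp

lemma delta_mul_incl_mul_delta (g : C(X, ℂ)) (x : X) :
    linfDelta x * inclCLinf g * linfDelta x = g x • linfDelta x := by
  apply lp.ext
  rw [lp.infty_coeFn_mul, lp.infty_coeFn_mul, lp.coeFn_smul]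
  funext z
  simp only [Pi.mul_apply, Pi.smul_apply, linfDelta_apply, inclCLinf_apply, smul_eq_mul]
  by_cases hz : z = x
  · subst hz; simp
  · simp [hz]

open scoped Classical in
lemma incl_eq_delta_add_star_mul {f : C(X, ℝ)} (x : X)
    (hf0 : ∀ z, 0 ≤ f z) (hfx : f x = 1) :
    ∃ r : lp (fun _ : X => ℂ) ∞,
      inclCLinf ⟨fun z => (f z : ℂ), Complex.continuous_ofReal.comp f.continuous⟩
        = linfDelta x + star r * r := by
  refine ⟨⟨fun z => if z = x then 0 else ((Real.sqrt (f z) : ℝ) : ℂ), memℓp_infty ?_⟩, ?_⟩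
  · refine ⟨Real.sqrt ‖f‖, ?_⟩
    rintro s ⟨z, rfl⟩
    dsimp only
    split
    · simp [Real.sqrt_nonneg]
    · rw [Complex.norm_real, Real.norm_eq_abs, abs_of_nonneg (Real.sqrt_nonneg _)]
      exact Real.sqrt_le_sqrt ((le_abs_self _).trans ((f.norm_coe_le_norm z)))
  · apply lp.ext
    rw [lp.coeFn_add, lp.infty_coeFn_mul, lp.coeFn_star]
    funext z
    simp only [Pi.add_apply, Pi.mul_apply, Pi.star_apply, linfDelta_apply, inclCLinf_apply]
    by_cases hz : z = x
    · subst hz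
      simp [ContinuousMap.coe_mk, hfx]
    · rw [if_neg hz]
      simp only [ContinuousMap.coe_mk]
      rw [zero_add, if_neg hz, Complex.star_def, Complex.conj_ofReal, ← Complex.ofReal_mul,
        Real.mul_self_sqrt (hf0 z)]

end LpAux

open scoped Pointwise

section StateAux
variable {M : Type*} [CStarAlgebra M]

lemma auxIm [Nontrivial M] (Λ : M →L[ℂ] ℂ) (hΛ : ‖Λ‖ ≤ 1) (h1 : Λ 1 = 1)
    (s : M) (hs : star s = s) : (Λ s).im = 0 := by
  set β := (Λ s).im with hβdef
  by_contra hβ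
  have key : ∀ t : ℝ, (β + t) ^ 2 ≤ ‖s‖ ^ 2 + t ^ 2 := by
    intro t
    set c : ℂ := Complex.I * t with hc
    set e : M := algebraMap ℂ M c with he
    have hcc : c * c = -((t : ℂ) ^ 2) := by
      rw [hc]; ring_nf; rw [Complex.I_sq]; ring
    have hstar : star (s + e) = s - e := by
      rw [star_add, hs, he, ← algebraMap_star_comm]
      have : star c = -c := by
        simp [hc, Complex.ext_iff]
      rw [this, map_neg, sub_eq_add_neg]
    have hmul : star (s + e) * (s + e) = s * s + algebraMap ℂ M ((t : ℂ) ^ 2) := by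
      rw [hstar]
      have hse : s * e = e * s := (Algebra.commutes c s).symm
      have expand : (s - e) * (s + e) = s * s + (s * e - e * s) - e * e := by
        noncomm_ring
      rw [expand, hse, sub_self, add_zero, he, ← map_mul, hcc, map_neg, sub_neg_eq_add]
    have hnormu : ‖s + e‖ ^ 2 ≤ ‖s‖ ^ 2 + t ^ 2 := by
      have h1' : ‖s + e‖ * ‖s + e‖ = ‖star (s + e) * (s + e)‖ :=
        (CStarRing.norm_star_mul_self).symm
      have h2' : ‖star (s + e) * (s + e)‖ ≤ ‖s‖ ^ 2 + t ^ 2 := by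
        rw [hmul]
        refine (norm_add_le _ _).trans ?_
        have hss : ‖s * s‖ = ‖s‖ ^ 2 := by
          conv_lhs => rw [show s * s = star s * s from by rw [hs]]
          rw [CStarRing.norm_star_mul_self, sq]
        have halg : ‖algebraMap ℂ M ((t : ℂ) ^ 2)‖ = t ^ 2 := by
          rw [norm_algebraMap']
          simp [← Complex.ofReal_pow, Complex.norm_real]
        rw [hss, halg]
      calc ‖s + e‖ ^ 2 = ‖s + e‖ * ‖s + e‖ := sq (‖s + e‖) ▸ by ring
        _ = ‖star (s + e) * (s + e)‖ := h1'
        _ ≤ _ := h2'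
    have hΛu : ‖Λ (s + e)‖ ^ 2 ≤ ‖s‖ ^ 2 + t ^ 2 := by
      have := Λ.le_opNorm (s + e)
      have h3 : ‖Λ (s + e)‖ ≤ ‖s + e‖ := by
        nlinarith [norm_nonneg (s + e), norm_nonneg (Λ (s + e))]
      nlinarith [norm_nonneg (Λ (s + e)), norm_nonneg (s + e)]
    have him : (Λ (s + e)).im = β + t := by
      rw [map_add]
      have : Λ e = c := by
        rw [he, Algebra.algebraMap_eq_smul_one, Λ.map_smul, h1, smul_eq_mul, mul_one]
      rw [this]
      simp [hc, hβdef]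
    have h4 : (β + t) ^ 2 ≤ ‖Λ (s + e)‖ ^ 2 := by
      rw [← him]
      have h7 := Complex.abs_im_le_norm (Λ (s + e))
      have h8 := abs_le.mp h7
      nlinarith [norm_nonneg (Λ (s + e)), h8.1, h8.2]
    linarith
  have h5 := key ((‖s‖ ^ 2 + 1) / (2 * β))
  have h6 : 2 * β * ((‖s‖ ^ 2 + 1) / (2 * β)) = ‖s‖ ^ 2 + 1 := by
    field_simp
  nlinarith [sq_nonneg β, sq_nonneg ((‖s‖ ^ 2 + 1) / (2 * β))]

end StateAux

section StateAux2
variable {M : Type*} [CStarAlgebra M]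

lemma auxPos [PartialOrder M] [StarOrderedRing M] [Nontrivial M] (Λ : M →L[ℂ] ℂ) (hΛ : ‖Λ‖ ≤ 1) (h1 : Λ 1 = 1)
    (m : M) : 0 ≤ Λ (star m * m) := by
  set b := star m * m with hb
  have hbs : star b = b := by rw [hb, star_mul, star_star]
  have hbnn : 0 ≤ b := star_mul_self_nonneg m
  have him : (Λ b).im = 0 := auxIm Λ hΛ h1 b hbs
  set R := ‖b‖ with hR
  have hble : b ≤ algebraMap ℝ M R := IsSelfAdjoint.le_algebraMap_norm_self hbs
  set d := algebraMap ℝ M R - b with hd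
  have hd0 : 0 ≤ d := sub_nonneg.2 hble
  have hdle : d ≤ algebraMap ℝ M R := by
    rw [hd]; exact sub_le_self _ hbnn
  have hnd : ‖d‖ ≤ R := (CStarAlgebra.norm_le_iff_le_algebraMap d (norm_nonneg b) hd0).2 hdle
  have hΛd : ‖Λ d‖ ≤ R := by
    have := Λ.le_opNorm d
    nlinarith [norm_nonneg d, norm_nonneg (Λ d)]
  have hΛalg : Λ (algebraMap ℝ M R) = (R : ℂ) := by
    rw [IsScalarTower.algebraMap_apply ℝ ℂ M, Algebra.algebraMap_eq_smul_one, Λ.map_smul, h1,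
      smul_eq_mul, mul_one, Complex.coe_algebraMap]
  have hΛdval : Λ d = ((R - (Λ b).re : ℝ) : ℂ) := by
    rw [hd, map_sub, hΛalg]
    apply Complex.ext <;> simp [him]
  rw [hΛdval] at hΛd
  rw [Complex.norm_real] at hΛd
  have hre : 0 ≤ (Λ b).re := by
    have := abs_le.mp hΛd
    linarith [this.1, this.2]
  rw [Complex.nonneg_iff]
  exact ⟨hre, him.symm⟩

lemma existsState [PartialOrder M] [StarOrderedRing M] [Nontrivial M] (a : M) (ha : 0 ≤ a) (ha0 : a ≠ 0) :
    ∃ Λ : M →L[ℂ] ℂ, Λ 1 = 1 ∧ (∀ m : M, 0 ≤ Λ (star m * m)) ∧ Λ a = (‖a‖ : ℂ) := by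
  have hnorm : ‖(1 : M) + a‖ = 1 + ‖a‖ := by
    refine le_antisymm ((norm_add_le _ _).trans (by simp)) ?_
    have hmem : ((1 : ℝ) + ‖a‖) ∈ spectrum ℝ ((1 : M) + a) := by
      have h1 : ‖a‖ ∈ spectrum ℝ a := CStarAlgebra.norm_mem_spectrum_of_nonneg ha
      have h2 : ((1 : ℝ)) + ‖a‖ ∈ ({(1 : ℝ)} + spectrum ℝ a) :=
        Set.add_mem_add rfl h1
      rw [spectrum.singleton_add_eq] at h2
      simpa using h2
    have := spectrum.norm_le_norm_of_mem hmem
    rw [Real.norm_eq_abs, abs_of_nonneg (by positivity)] at this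
    exact this
  have hne : (1 : M) + a ≠ 0 := by
    intro h
    rw [h, norm_zero] at hnorm
    nlinarith [norm_nonneg a]
  obtain ⟨Λ, hΛ1, hΛx⟩ := exists_dual_vector ℂ _ (norm_ne_zero_iff.mpr hne)
  have hsum : Λ 1 + Λ a = ((1 + ‖a‖ : ℝ) : ℂ) := by
    rw [← map_add, hΛx, hnorm]; norm_num
  have e1 : ‖Λ 1‖ ≤ 1 := by
    have := Λ.le_opNorm 1
    simpa [hΛ1] using this
  have e2 : ‖Λ a‖ ≤ ‖a‖ := by
    have := Λ.le_opNorm a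
    simpa [hΛ1] using this
  have hre1 : (Λ 1).re ≤ 1 := le_trans (Complex.re_le_norm _) (by assumption)
  have hre2 : (Λ a).re ≤ ‖a‖ := le_trans (Complex.re_le_norm _) (by assumption)
  have hsumre : (Λ 1).re + (Λ a).re = 1 + ‖a‖ := by
    have := congrArg Complex.re hsum
    simpa using this
  have hre1' : (Λ 1).re = 1 := by linarith
  have hre2' : (Λ a).re = ‖a‖ := by linarith
  have hΛ1eq : Λ 1 = 1 := by
    have h1 : ‖Λ 1‖ ^ 2 = (Λ 1).re ^ 2 + (Λ 1).im ^ 2 := by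
      rw [Complex.sq_norm, Complex.normSq_apply]; ring
    have : (Λ 1).im = 0 := by nlinarith [norm_nonneg (Λ 1)]
    apply Complex.ext <;> simp [hre1', this]
  have hΛaeq : Λ a = (‖a‖ : ℂ) := by
    have h1 : ‖Λ a‖ ^ 2 = (Λ a).re ^ 2 + (Λ a).im ^ 2 := by
      rw [Complex.sq_norm, Complex.normSq_apply]; ring
    have : (Λ a).im = 0 := by nlinarith [norm_nonneg (Λ a), norm_nonneg a]
    apply Complex.ext <;> simp [hre2', this]
  exact ⟨Λ, hΛ1eq, fun m => auxPos Λ (le_of_eq hΛ1) hΛ1eq m, hΛaeq⟩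

end StateAux2

/-- A pair of unital `*`-homomorphisms `ι_C : C(X) → A`, `ι_D : C(Y) → A` is *relatively
diffuse* if every state `ψ` of `A` whose composite with `ι_D` is multiplicative (i.e. a
character of `C(Y)`) is, on `C(X)`, given by integration against an atomless regular Borel
probability measure on `X`. -/
def RelativelyDiffuse {A : Type*} [CStarAlgebra A]
    {X Y : Type*} [TopologicalSpace X] [CompactSpace X] [T2Space X]
    [MeasurableSpace X] [BorelSpace X]
    [TopologicalSpace Y] [CompactSpace Y] [T2Space Y]
    (ιC : C(X, ℂ) →⋆ₐ[ℂ] A) (ιD : C(Y, ℂ) →⋆ₐ[ℂ] A) : Prop :=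
  ∀ ψ : A →ₗ[ℂ] ℂ, ψ 1 = 1 → (∀ a : A, 0 ≤ ψ (star a * a)) →
    (∀ g h : C(Y, ℂ), ψ (ιD (g * h)) = ψ (ιD g) * ψ (ιD h)) →
    ∃ μ : Measure X, μ.Regular ∧ IsProbabilityMeasure μ ∧ NoAtoms μ ∧
      ∀ f : C(X, ℂ), ψ (ιC f) = ∫ x, f x ∂μ

/-- **Theorem (orthogonality of discretizing projections).**
If `C(X)` and `C(Y)` sit relatively diffusely in a unital C*-algebra `A`, and the
`*`-homomorphism `φ : A → M` restricts on these subalgebras to `*`-homomorphisms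
`φ_C : ℓ∞(X) → M` and `φ_D : ℓ∞(Y) → M`, then `φ_C(δ_x) · φ_D(δ_y) = 0` for all
`x ∈ X`, `y ∈ Y`. -/
theorem stmt0 {A M : Type*} [CStarAlgebra A] [CStarAlgebra M]
    {X Y : Type*} [TopologicalSpace X] [CompactSpace X] [T2Space X]
    [MeasurableSpace X] [BorelSpace X]
    [TopologicalSpace Y] [CompactSpace Y] [T2Space Y]
    (ιC : C(X, ℂ) →⋆ₐ[ℂ] A) (ιD : C(Y, ℂ) →⋆ₐ[ℂ] A)
    (hdiff : RelativelyDiffuse ιC ιD)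
    (φ : A →⋆ₐ[ℂ] M)
    (φC : lp (fun _ : X => ℂ) ∞ →⋆ₐ[ℂ] M) (φD : lp (fun _ : Y => ℂ) ∞ →⋆ₐ[ℂ] M)
    (hφC : ∀ f : C(X, ℂ), φC (inclCLinf f) = φ (ιC f))
    (hφD : ∀ f : C(Y, ℂ), φD (inclCLinf f) = φ (ιD f))
    (x : X) (y : Y) :
    φC (linfDelta x) * φD (linfDelta y) = 0 := by
  set p : M := φC (linfDelta x) with hp
  set q : M := φD (linfDelta y) with hq
  have hp2 : p * p = p := by rw [hp, ← map_mul, linfDelta_mul_self]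
  have hq2 : q * q = q := by rw [hq, ← map_mul, linfDelta_mul_self]
  have hps : star p = p := by rw [hp, ← map_star, star_linfDelta]
  have hqs : star q = q := by rw [hq, ← map_star, star_linfDelta]
  clear_value p q
  set a : M := q * (p * q) with ha
  clear_value a
  have haeq : star (p * q) * (p * q) = a := by
    rw [star_mul, hps, hqs, ha, mul_assoc, ← mul_assoc p p q, hp2]
  suffices hA : a = 0 by
    have h := CStarRing.norm_star_mul_self (x := p * q)
    rw [haeq, hA, norm_zero] at h
    exact norm_eq_zero.mp (mul_self_eq_zero.mp h.symm)
  by_contra hA0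
  haveI : Nontrivial M := ⟨⟨a, 0, hA0⟩⟩
  letI : PartialOrder M := CStarAlgebra.spectralOrder M
  letI : StarOrderedRing M := CStarAlgebra.spectralOrderedRing M
  have hanneg : 0 ≤ a := haeq ▸ star_mul_self_nonneg (p * q)
  obtain ⟨Λ, hΛ1, hΛpos, hΛa⟩ := existsState a hanneg hA0
  have hnapos : 0 < ‖a‖ := norm_pos_iff.mpr hA0
  -- Λ q is a positive real, at least ‖a‖
  have hqa : q - a = star ((1 - p) * q) * ((1 - p) * q) := by
    have hstar : star ((1 - p) * q) = q * (1 - p) := by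
      rw [star_mul, star_sub, star_one, hps, hqs]
    rw [hstar]
    have h1p : (1 - p) * (1 - p) = 1 - p := by
      have hexp0 : (1 - p) * (1 - p) = 1 - p - p + p * p := by noncomm_ring
      rw [hexp0, hp2]; abel
    have hexp : q * (1 - p) * ((1 - p) * q) = q * ((1 - p) * (1 - p)) * q := by noncomm_ring
    rw [hexp, h1p]
    have hexp2 : q * (1 - p) * q = q * q - q * (p * q) := by noncomm_ring
    rw [hexp2, hq2, ha]
  have hΛqa : 0 ≤ Λ (q - a) := hqa ▸ hΛpos ((1 - p) * q)
  have hΛq : Λ q = (‖a‖ : ℂ) + Λ (q - a) := by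
    rw [map_sub, hΛa]; ring
  obtain ⟨hqa_re, hqa_im⟩ := Complex.nonneg_iff.mp hΛqa
  set Rq : ℝ := (Λ q).re with hRq
  have him : (Λ q).im = 0 := by
    rw [hΛq, Complex.add_im, Complex.ofReal_im, ← hqa_im, zero_add]
  have hΛqval : Λ q = (Rq : ℂ) := by
    apply Complex.ext
    · simp [hRq]
    · simp [him]
  have hRqpos : 0 < Rq := by
    have h := congrArg Complex.re hΛq
    simp only [Complex.add_re, Complex.ofReal_re] at h
    rw [hRq, h]
    linarith [hqa_re, hnapos]
  have hΛqne : Λ q ≠ 0 := by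
    rw [hΛqval]
    exact_mod_cast Complex.ofReal_ne_zero.mpr hRqpos.ne'
  -- the state on A
  set T : A →ₗ[ℂ] ℂ :=
    { toFun := fun z => (Λ q)⁻¹ * Λ (q * φ z * q)
      map_add' := by
        intro u v
        simp only [map_add, mul_add, add_mul]
        try ring
      map_smul' := by
        intro c u
        simp only [_root_.map_smul, Algebra.mul_smul_comm, Algebra.smul_mul_assoc, smul_eq_mul,
          RingHom.id_apply]
        ring } with hT
  have hTapp : ∀ z : A, T z = (Λ q)⁻¹ * Λ (q * φ z * q) := fun z => rfl
  have hT1 : T 1 = 1 := by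
    rw [hTapp, map_one, mul_one, hq2, inv_mul_cancel₀ hΛqne]
  have hTpos : ∀ z : A, 0 ≤ T (star z * z) := by
    intro z
    have hkey : q * φ (star z * z) * q = star (φ z * q) * (φ z * q) := by
      rw [map_mul, map_star, star_mul, hqs]
      simp [mul_assoc]
    rw [hTapp, hkey]
    have h1 : (0 : ℂ) ≤ (Λ q)⁻¹ := by
      rw [hΛqval, ← Complex.ofReal_inv]
      exact Complex.zero_le_real.mpr (by positivity)
    exact mul_nonneg h1 (hΛpos _)
  have hTval : ∀ g : C(Y, ℂ), T (ιD g) = g y := by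
    intro g
    have hkey : q * φ (ιD g) * q = g y • q := by
      rw [← hφD g, hq, ← map_mul, ← map_mul, delta_mul_incl_mul_delta, _root_.map_smul]
    rw [hTapp, hkey, _root_.map_smul, smul_eq_mul, ← mul_assoc, mul_comm ((Λ q)⁻¹) (g y),
      mul_assoc, inv_mul_cancel₀ hΛqne, mul_one]
  have hTmul : ∀ g h : C(Y, ℂ), T (ιD (g * h)) = T (ιD g) * T (ιD h) := by
    intro g h
    rw [hTval, hTval, hTval]
    simp
  obtain ⟨μ, hreg, hprob, hatom, hint⟩ := hdiff T hT1 hTpos hTmul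
  -- choose a small open neighborhood of x
  set c : ℝ := ‖a‖ / Rq with hc
  have hcpos : 0 < c := div_pos hnapos hRqpos
  have hxlt : μ {x} < ENNReal.ofReal c := by
    rw [hatom.measure_singleton x]
    exact ENNReal.ofReal_pos.mpr hcpos
  obtain ⟨U, hxU, hUopen, hUlt⟩ := Set.exists_isOpen_lt_of_lt {x} _ hxlt
  -- Urysohn function
  obtain ⟨f, hf0, hf1, hf01⟩ := exists_continuous_zero_one_of_isClosed
    hUopen.isClosed_compl isClosed_singleton
    (disjoint_compl_left_iff.mpr (by simpa using hxU))
  have hfx : f x = 1 := hf1 rfl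
  have hfnn : ∀ z, 0 ≤ f z := fun z => (hf01 z).1
  set fc : C(X, ℂ) := ⟨fun z => (f z : ℂ), Complex.continuous_ofReal.comp f.continuous⟩ with hfc
  -- lower bound
  obtain ⟨r, hr⟩ := incl_eq_delta_add_star_mul x hfnn hfx
  have hφfc : φ (ιC fc) = p + star (φC r) * φC r := by
    rw [← hφC, hfc, hr, map_add, map_mul, map_star, ← hp]
  have hkey : q * φ (ιC fc) * q = a + star (φC r * q) * (φC r * q) := by
    rw [hφfc, mul_add, add_mul, ha, star_mul, hqs, ← mul_assoc]
    congr 1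
    · rw [mul_assoc]
    · simp [mul_assoc]
  have hlow : (‖a‖ : ℂ) ≤ Λ (q * φ (ιC fc) * q) := by
    rw [hkey, map_add, hΛa]
    exact le_add_of_nonneg_right (hΛpos _)
  have hTfc : T (ιC fc) = ((∫ z, f z ∂μ : ℝ) : ℂ) := by
    rw [hint fc, hfc]
    simp only [ContinuousMap.coe_mk]
    exact integral_ofReal
  have hΛfc : Λ (q * φ (ιC fc) * q) = ((Rq * ∫ z, f z ∂μ : ℝ) : ℂ) := by
    have h1 := hTapp (ιC fc)
    rw [hTfc] at h1
    have h2 : Λ (q * φ (ιC fc) * q) = Λ q * ((∫ z, f z ∂μ : ℝ) : ℂ) := by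
      field_simp at h1 ⊢
      rw [← h1]
    rw [h2, hΛqval]
    push_cast
    ring
  have hreal : ‖a‖ ≤ Rq * ∫ z, f z ∂μ := by
    rw [hΛfc] at hlow
    exact_mod_cast Complex.real_le_real.mp hlow
  -- upper bound
  haveI := hprob
  haveI : IsFiniteMeasure μ := inferInstance
  have hfint : Integrable (fun z => f z) μ :=
    f.continuous.integrable_of_hasCompactSupport (HasCompactSupport.of_compactSpace _)
  have hgint : Integrable (U.indicator fun _ => (1 : ℝ)) μ :=
    (integrable_const 1).indicator hUopen.measurableSet
  have hle : ∀ z, f z ≤ U.indicator (fun _ => (1 : ℝ)) z := by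
    intro z
    by_cases hz : z ∈ U
    · rw [Set.indicator_of_mem hz]
      exact (hf01 z).2
    · rw [Set.indicator_of_notMem hz]
      simpa using le_of_eq (hf0 hz)
  have hintle : ∫ z, f z ∂μ ≤ (μ U).toReal := by
    calc ∫ z, f z ∂μ ≤ ∫ z, U.indicator (fun _ => (1 : ℝ)) z ∂μ :=
          integral_mono hfint hgint hle
      _ = (μ U).toReal := by
          rw [integral_indicator_const (1 : ℝ) hUopen.measurableSet, smul_eq_mul, mul_one, measureReal_def]
  have htoReal : (μ U).toReal < c := ENNReal.toReal_lt_of_lt_ofReal hUlt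
  have : Rq * ∫ z, f z ∂μ < ‖a‖ := by
    calc Rq * ∫ z, f z ∂μ ≤ Rq * (μ U).toReal :=
          mul_le_mul_of_nonneg_left hintle hRqpos.le
      _ < Rq * c := by exact mul_lt_mul_of_pos_left htoReal hRqpos
      _ = ‖a‖ := by rw [hc, mul_div_cancel₀ _ hRqpos.ne']
  linarith
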